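/- Let μ ≠ 0, J ≠ 0 and let (θ, ω, ψ_d, ρ, I_d, I_q) be a differentiable solution of the induction motor model on an interval I with ψ_d(t) ≠ 0 for all t. Define x₁ = θ, x₂¹ = ω, x₂² = ρ, x₂³ = ηM/(μψ_d²), x₃₂¹ = μψ_d I_q − τ_L/J, and x₃₁¹ = 2η²M/(μψ_d²) − 2η²M² I_d/(μψ_d³). Then along the solution: ẋ₁ = x₂¹, ẋ₂¹ = x₃₂¹, ẋ₂² = x₂³·x₃₂¹ + n_p·x₂¹ + (τ_L/J)·x₂³, and ẋ₂³ = x₃₁¹; i.e., the transformed variables satisfy the structurally flat triangular form of the paper (equation (10)). -/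

import Mathlib

/-- A differentiable solution of the induction motor model
`θ̇ = ω`, `ω̇ = μψ_d I_q − τ_L/J`, `ψ̇_d = −ηψ_d + ηM I_d`, `ρ̇ = n_pω + ηM I_q/ψ_d`,
`İ_d = v_d`, `İ_q = v_q` on a set `I ⊆ ℝ`. -/
def IsMotorSolution (μ η M np τL J : ℝ) (I : Set ℝ)
    (θ ω ψ ρ Id Iq vd vq : ℝ → ℝ) : Prop :=
  ∀ t ∈ I,
    HasDerivAt θ (ω t) t ∧
    HasDerivAt ω (μ * ψ t * Iq t - τL / J) t ∧
    HasDerivAt ψ (-(η * ψ t) + η * M * Id t) t ∧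
    HasDerivAt ρ (np * ω t + η * M * Iq t / ψ t) t ∧
    HasDerivAt Id (vd t) t ∧
    HasDerivAt Iq (vq t) t

/-- Along any solution of the induction motor model with `ψ_d ≠ 0`, the transformed
variables `x₁ = θ`, `x₂¹ = ω`, `x₂² = ρ`, `x₂³ = ηM/(μψ_d²)`,
`x₃₂¹ = μψ_d I_q − τ_L/J`, `x₃₁¹ = 2η²M/(μψ_d²) − 2η²M² I_d/(μψ_d³)` satisfy the
structurally flat triangular form (equation (10) of the paper):
`ẋ₁ = x₂¹`, `ẋ₂¹ = x₃₂¹`, `ẋ₂² = x₂³·x₃₂¹ + n_p·x₂¹ + (τ_L/J)·x₂³`, `ẋ₂³ = x₃₁¹`. -/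
theorem stmt12 (μ η M np τL J : ℝ) (hμ : μ ≠ 0) (hJ : J ≠ 0)
    (I : Set ℝ) (θ ω ψ ρ Id Iq vd vq : ℝ → ℝ)
    (hsol : IsMotorSolution μ η M np τL J I θ ω ψ ρ Id Iq vd vq)
    (hψ : ∀ t ∈ I, ψ t ≠ 0) :
    ∀ t ∈ I,
      -- ẋ₁ = x₂¹
      HasDerivAt θ (ω t) t ∧
      -- ẋ₂¹ = x₃₂¹
      HasDerivAt ω (μ * ψ t * Iq t - τL / J) t ∧
      -- ẋ₂² = x₂³·x₃₂¹ + n_p·x₂¹ + (τ_L/J)·x₂³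
      HasDerivAt ρ ((η * M / (μ * (ψ t) ^ 2)) * (μ * ψ t * Iq t - τL / J) +
        np * ω t + (τL / J) * (η * M / (μ * (ψ t) ^ 2))) t ∧
      -- ẋ₂³ = x₃₁¹
      HasDerivAt (fun s => η * M / (μ * (ψ s) ^ 2))
        (2 * η ^ 2 * M / (μ * (ψ t) ^ 2) - 2 * η ^ 2 * M ^ 2 * Id t / (μ * (ψ t) ^ 3)) t := by
  intro t ht
  obtain ⟨h1, h2, h3, h4, h5, h6⟩ := hsol t ht
  have hψt := hψ t ht
  refine ⟨h1, h2, ?_, ?_⟩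
  · convert h4 using 1
    field_simp
    ring
  · have hden : HasDerivAt (fun s => μ * ψ s ^ 2)
        (μ * (2 * ψ t ^ 1 * (-(η * ψ t) + η * M * Id t))) t := (h3.pow 2).const_mul μ
    have := (hasDerivAt_const t (η * M)).div hden (mul_ne_zero hμ (pow_ne_zero 2 hψt))
    convert (show HasDerivAt (fun s => η * M / (μ * ψ s ^ 2)) _ t from this) using 1
    field_simp
    ring
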